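/- Let Θ ⊂ ℝ²_{≥0} be a lattice polygon with nonempty interior. The symmetric extension φ̃_Θ of the moment map is well defined on (ℝ*)² and is a homeomorphism of (ℝ*)² onto the union ⋃_{ρ∈S} ρ(int Θ); moreover the four sets ρ(int Θ), ρ ∈ S, are pairwise disjoint (in particular int Θ ⊂ ℝ²_{>0}). -/

import Mathlib

noncomputable section

/-- Embedding of an integral point into the real plane. -/
def latticeEmb (p : ℤ × ℤ) : ℝ × ℝ := ((p.1 : ℝ), (p.2 : ℝ))

/-- The open positive quadrant ℝ²_{>0}. -/
def posQuad : Set (ℝ × ℝ) := {q : ℝ × ℝ | 0 < q.1 ∧ 0 < q.2}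

/-- The real torus (ℝ*)². -/
def realTorus : Set (ℝ × ℝ) := {q : ℝ × ℝ | q.1 ≠ 0 ∧ q.2 ≠ 0}

/-- The orthogonal reflection ρ_{i,j} with respect to the coordinate axes. -/
def quadRefl (s : Bool × Bool) (q : ℝ × ℝ) : ℝ × ℝ :=
  ((if s.1 then -q.1 else q.1), (if s.2 then -q.2 else q.2))

/-- Ã : the union of the four reflected copies of A. -/
def tildeSet (A : Set (ℝ × ℝ)) : Set (ℝ × ℝ) := ⋃ s : Bool × Bool, quadRefl s '' A

/-- The moment map associated to a (bounded) region `Θ`. -/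
def momentMap (Θ : Set (ℝ × ℝ)) (q : ℝ × ℝ) : ℝ × ℝ :=
  (∑ᶠ (p : ℤ × ℤ) (_ : latticeEmb p ∈ Θ), q.1 ^ p.1 * q.2 ^ p.2)⁻¹ •
    ∑ᶠ (p : ℤ × ℤ) (_ : latticeEmb p ∈ Θ), (q.1 ^ p.1 * q.2 ^ p.2) • latticeEmb p

/-- The symmetric extension φ̃_Θ of the moment map to (ℝ*)². -/
def tildeMomentMap (Θ : Set (ℝ × ℝ)) (q : ℝ × ℝ) : ℝ × ℝ :=
  (Real.sign q.1 * (momentMap Θ (|q.1|, |q.2|)).1,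
   Real.sign q.2 * (momentMap Θ (|q.1|, |q.2|)).2)

open Real Set Topology

def mdot (x y : ℝ × ℝ) : ℝ := x.1 * y.1 + x.2 * y.2

lemma mdot_smul_left (c : ℝ) (x y : ℝ × ℝ) : mdot (c • x) y = c * mdot x y := by
  simp [mdot]; ring

lemma mdot_sum_left {ι : Type*} (s : Finset ι) (f : ι → ℝ × ℝ) (y : ℝ × ℝ) :
    mdot (∑ i ∈ s, f i) y = ∑ i ∈ s, mdot (f i) y := by
  simp [mdot, Prod.fst_sum, Prod.snd_sum, Finset.sum_mul, Finset.sum_add_distrib]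

def mdotCLM (t : ℝ × ℝ) : (ℝ × ℝ) →L[ℝ] ℝ :=
  t.1 • (ContinuousLinearMap.fst ℝ ℝ ℝ) + t.2 • (ContinuousLinearMap.snd ℝ ℝ ℝ)

lemma mdotCLM_apply (t u : ℝ × ℝ) : mdotCLM t u = mdot t u := by
  simp [mdotCLM, mdot, mul_comm]

def mEf (t u : ℝ × ℝ) : ℝ := Real.exp (mdot t u)

lemma mEf_pos (t u : ℝ × ℝ) : 0 < mEf t u := Real.exp_pos _

def mF (T : Finset (ℝ × ℝ)) (u : ℝ × ℝ) : ℝ := ∑ t ∈ T, mEf t u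

def mNum (T : Finset (ℝ × ℝ)) (u : ℝ × ℝ) : ℝ × ℝ := ∑ t ∈ T, mEf t u • t

def mPhi (T : Finset (ℝ × ℝ)) (u : ℝ × ℝ) : ℝ × ℝ := (mF T u)⁻¹ • mNum T u

lemma mF_pos {T : Finset (ℝ × ℝ)} (hT : T.Nonempty) (u : ℝ × ℝ) : 0 < mF T u :=
  Finset.sum_pos (fun t _ => mEf_pos t u) hT

lemma continuous_mdot (t : ℝ × ℝ) : Continuous (fun u => mdot t u) := by
  unfold mdot; fun_prop

lemma continuous_mEf (t : ℝ × ℝ) : Continuous (mEf t) :=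
  Real.continuous_exp.comp (continuous_mdot t)

lemma continuous_mF (T : Finset (ℝ × ℝ)) : Continuous (mF T) :=
  continuous_finset_sum _ (fun t _ => continuous_mEf t)

lemma continuous_mNum (T : Finset (ℝ × ℝ)) : Continuous (mNum T) :=
  continuous_finset_sum _ (fun t _ => (continuous_mEf t).smul continuous_const)

lemma continuous_mPhi {T : Finset (ℝ × ℝ)} (hT : T.Nonempty) : Continuous (mPhi T) :=
  (((continuous_mF T).inv₀ (fun u => (mF_pos hT u).ne')).smul (continuous_mNum T))

lemma hasFDerivAt_mEf (t u : ℝ × ℝ) :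
    HasFDerivAt (mEf t) (mEf t u • mdotCLM t) u := by
  have h1 : HasFDerivAt (fun u => mdot t u) (mdotCLM t) u := by
    have := (mdotCLM t).hasFDerivAt (x := u)
    apply this.congr_of_eventuallyEq
    filter_upwards with x using (mdotCLM_apply t x).symm
  exact (Real.hasDerivAt_exp (mdot t u)).comp_hasFDerivAt u h1

lemma hasFDerivAt_mF (T : Finset (ℝ × ℝ)) (u : ℝ × ℝ) :
    HasFDerivAt (mF T) (∑ t ∈ T, mEf t u • mdotCLM t) u :=
  HasFDerivAt.fun_sum (fun t _ => hasFDerivAt_mEf t u)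

def mG (T : Finset (ℝ × ℝ)) (u : ℝ × ℝ) : ℝ := Real.log (mF T u)

lemma continuous_mG {T : Finset (ℝ × ℝ)} (hT : T.Nonempty) : Continuous (mG T) :=
  (continuous_mF T).log (fun u => (mF_pos hT u).ne')

lemma hasFDerivAt_mG {T : Finset (ℝ × ℝ)} (hT : T.Nonempty) (u : ℝ × ℝ) :
    HasFDerivAt (mG T) ((mF T u)⁻¹ • ∑ t ∈ T, mEf t u • mdotCLM t) u :=
  (hasFDerivAt_mF T u).log (mF_pos hT u).ne'

lemma mG_grad_apply (T : Finset (ℝ × ℝ)) (u w : ℝ × ℝ) :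
    ((mF T u)⁻¹ • ∑ t ∈ T, mEf t u • mdotCLM t) w = mdot (mPhi T u) w := by
  rw [mPhi, mdot_smul_left, mNum, mdot_sum_left]
  simp only [ContinuousLinearMap.smul_apply, ContinuousLinearMap.coe_sum', Finset.sum_apply,
    ContinuousLinearMap.smul_apply, mdotCLM_apply, mdot_smul_left, smul_eq_mul]

lemma variance_pos {ι : Type*} (s : Finset ι) (a β : ι → ℝ) (ha : ∀ i ∈ s, 0 < a i)
    {p q : ι} (hp : p ∈ s) (hq : q ∈ s) (hβ : β p ≠ β q) :
    0 < (∑ i ∈ s, a i * β i ^ 2) * (∑ i ∈ s, a i) - (∑ i ∈ s, a i * β i) ^ 2 := by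
  set A := ∑ i ∈ s, a i * β i ^ 2 with hA
  set B := ∑ i ∈ s, a i with hB
  set C := ∑ i ∈ s, a i * β i with hC
  have key : ∑ i ∈ s, ∑ j ∈ s, a i * a j * (β i - β j) ^ 2 = 2 * (A * B - C ^ 2) := by
    have inner : ∀ i ∈ s, ∑ j ∈ s, a i * a j * (β i - β j) ^ 2
        = B * (a i * β i ^ 2) - C * (2 * (a i * β i)) + A * a i := by
      intro i _
      calc ∑ j ∈ s, a i * a j * (β i - β j) ^ 2
          = ∑ j ∈ s, (a j * (a i * β i ^ 2) - a j * β j * (2 * (a i * β i))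
              + a j * β j ^ 2 * a i) := Finset.sum_congr rfl (fun j _ => by ring)
        _ = B * (a i * β i ^ 2) - C * (2 * (a i * β i)) + A * a i := by
            rw [Finset.sum_add_distrib, Finset.sum_sub_distrib, ← Finset.sum_mul,
              ← Finset.sum_mul, ← Finset.sum_mul, ← hA, ← hB, ← hC]
    rw [Finset.sum_congr rfl inner, Finset.sum_add_distrib, Finset.sum_sub_distrib,
      ← Finset.mul_sum, ← Finset.mul_sum, ← Finset.mul_sum, ← Finset.mul_sum, ← hA, ← hC, ← hB]
    ring
  have hQ : 0 < ∑ i ∈ s, ∑ j ∈ s, a i * a j * (β i - β j) ^ 2 := by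
    rw [← Finset.sum_product']
    apply Finset.sum_pos'
    · intro x hx
      rw [Finset.mem_product] at hx
      have h1 := ha _ hx.1; have h2 := ha _ hx.2
      positivity
    · refine ⟨(p, q), Finset.mem_product.2 ⟨hp, hq⟩, ?_⟩
      have h1 := ha p hp; have h2 := ha q hq
      have h3 : β p - β q ≠ 0 := sub_ne_zero.2 hβ
      positivity
  rw [key] at hQ
  linarith
-- Part 3: line restriction
lemma mdot_line (p b v : ℝ × ℝ) (t : ℝ) : mdot p (b + t • v) = mdot p b + t * mdot p v := by
  simp [mdot]; ring

lemma hasDerivAt_line (b v : ℝ × ℝ) (t : ℝ) : HasDerivAt (fun t : ℝ => b + t • v) v t := by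
  simpa using ((hasDerivAt_id t).smul_const v).const_add b

lemma hasDerivAt_mG_line {T : Finset (ℝ × ℝ)} (hT : T.Nonempty) (b v : ℝ × ℝ) (t : ℝ) :
    HasDerivAt (fun t : ℝ => mG T (b + t • v)) (mdot (mPhi T (b + t • v)) v) t := by
  have h := (hasFDerivAt_mG hT (b + t • v)).comp_hasDerivAt t (hasDerivAt_line b v t)
  rwa [mG_grad_apply] at h

def etaF (T : Finset (ℝ × ℝ)) (b v : ℝ × ℝ) (t : ℝ) : ℝ := mdot (mPhi T (b + t • v)) v

lemma etaF_eq {T : Finset (ℝ × ℝ)} (b v : ℝ × ℝ) (t : ℝ) :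
    etaF T b v t = (∑ p ∈ T, Real.exp (mdot p b + t * mdot p v) * mdot p v)
      / (∑ p ∈ T, Real.exp (mdot p b + t * mdot p v)) := by
  have h1 : ∀ p : ℝ × ℝ, mEf p (b + t • v) = Real.exp (mdot p b + t * mdot p v) := by
    intro p; rw [mEf, mdot_line]
  rw [etaF, mPhi, mdot_smul_left, mNum, mdot_sum_left, div_eq_inv_mul, mF]
  congr 1
  · congr 1; exact Finset.sum_congr rfl (fun p _ => h1 p)
  · exact Finset.sum_congr rfl (fun p _ => by rw [mdot_smul_left, h1 p])

lemma hasDerivAt_exp_affine (α β t : ℝ) :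
    HasDerivAt (fun t : ℝ => Real.exp (α + t * β)) (Real.exp (α + t * β) * β) t := by
  have h : HasDerivAt (fun t : ℝ => α + t * β) β t := by
    simpa using ((hasDerivAt_id t).mul_const β).const_add α
  exact h.exp

lemma etaF_strictMono {T : Finset (ℝ × ℝ)} (hT : T.Nonempty) {b v : ℝ × ℝ} {p q : ℝ × ℝ}
    (hp : p ∈ T) (hq : q ∈ T) (hpq : mdot p v ≠ mdot q v) : StrictMono (etaF T b v) := by
  have heq : etaF T b v = fun t => (∑ p ∈ T, Real.exp (mdot p b + t * mdot p v) * mdot p v)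
      / (∑ p ∈ T, Real.exp (mdot p b + t * mdot p v)) := funext (etaF_eq b v)
  rw [heq]
  apply strictMono_of_deriv_pos
  intro t
  set a : ℝ × ℝ → ℝ := fun p => Real.exp (mdot p b + t * mdot p v) with ha
  have hDpos : 0 < ∑ p ∈ T, a p := Finset.sum_pos (fun p _ => Real.exp_pos _) hT
  have hN : HasDerivAt (fun t : ℝ => ∑ p ∈ T, Real.exp (mdot p b + t * mdot p v) * mdot p v)
      (∑ p ∈ T, a p * mdot p v ^ 2) t := by
    apply HasDerivAt.fun_sum
    intro p _
    have := (hasDerivAt_exp_affine (mdot p b) (mdot p v) t).mul_const (mdot p v)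
    simpa [ha, sq, mul_assoc, mul_comm, mul_left_comm] using this
  have hD : HasDerivAt (fun t : ℝ => ∑ p ∈ T, Real.exp (mdot p b + t * mdot p v))
      (∑ p ∈ T, a p * mdot p v) t := by
    apply HasDerivAt.fun_sum
    intro p _
    exact hasDerivAt_exp_affine (mdot p b) (mdot p v) t
  have hdiv := hN.fun_div hD hDpos.ne'
  rw [hdiv.deriv]
  apply div_pos
  · have := variance_pos T a (fun p => mdot p v) (fun p _ => Real.exp_pos _) hp hq hpq
    have hrw : (∑ p ∈ T, Real.exp (mdot p b + t * mdot p v) * mdot p v)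
        = ∑ p ∈ T, a p * mdot p v := rfl
    rw [hrw]
    nlinarith [this]
  · positivity

lemma mdot_mPhi_strict {T : Finset (ℝ × ℝ)} (hT : T.Nonempty) {x y : ℝ × ℝ} {p q : ℝ × ℝ}
    (hp : p ∈ T) (hq : q ∈ T) (hpq : mdot p (x - y) ≠ mdot q (x - y)) :
    mdot (mPhi T y) (x - y) < mdot (mPhi T x) (x - y) := by
  have h := (etaF_strictMono hT hp hq hpq (b := y)) zero_lt_one
  simpa [etaF] using h
-- Part 4
lemma mdot_add_left (x y v : ℝ × ℝ) : mdot (x + y) v = mdot x v + mdot y v := by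
  simp [mdot]; ring

lemma mdot_neg_right (x v : ℝ × ℝ) : mdot x (-v) = - mdot x v := by simp [mdot]; ring

lemma mdot_smul_right (c : ℝ) (x v : ℝ × ℝ) : mdot x (c • v) = c * mdot x v := by
  simp [mdot]; ring

lemma hasFDerivAt_mdot (y u : ℝ × ℝ) : HasFDerivAt (fun u => mdot y u) (mdotCLM y) u := by
  have := (mdotCLM y).hasFDerivAt (x := u)
  apply this.congr_of_eventuallyEq
  filter_upwards with x using (mdotCLM_apply y x).symm

lemma mdot_self_pos {v : ℝ × ℝ} (hv : v ≠ 0) : 0 < mdot v v := by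
  have h : v.1 ≠ 0 ∨ v.2 ≠ 0 := by
    by_contra h; push_neg at h; exact hv (Prod.ext h.1 h.2)
  unfold mdot
  rcases h with h | h
  · nlinarith [mul_self_pos.2 h, mul_self_nonneg v.2]
  · nlinarith [mul_self_pos.2 h, mul_self_nonneg v.1]

-- spanning from nonempty interior
lemma hspan_of_interior {T : Finset (ℝ × ℝ)} (hT : T.Nonempty)
    (hO : (interior (convexHull ℝ (↑T : Set (ℝ × ℝ)))).Nonempty) :
    ∀ v : ℝ × ℝ, v ≠ 0 → ∃ p ∈ T, ∃ q ∈ T, mdot p v ≠ mdot q v := by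
  intro v hv
  by_contra hcon
  push_neg at hcon
  obtain ⟨p0, hp0⟩ := hT
  set c := mdot p0 v with hc
  have hsub : convexHull ℝ (↑T : Set (ℝ × ℝ)) ⊆ {x | mdot x v = c} := by
    apply convexHull_min
    · intro x hx
      exact hcon x hx p0 hp0
    · intro x hx y hy a b _ _ hab
      simp only [mem_setOf_eq] at hx hy ⊢
      have : mdot (a • x + b • y) v = a * mdot x v + b * mdot y v := by
        rw [mdot_add_left, mdot_smul_left, mdot_smul_left]
      rw [this, hx, hy]
      linear_combination c * hab
  obtain ⟨z, hz⟩ := hO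
  have hz' : z ∈ interior {x : ℝ × ℝ | mdot x v = c} := interior_mono hsub hz
  obtain ⟨ε, hε, hball⟩ := Metric.isOpen_iff.1 isOpen_interior z hz'
  have hvnorm : 0 < ‖v‖ := norm_pos_iff.2 hv
  set δ := ε / (2 * ‖v‖) with hδ
  have hδpos : 0 < δ := by positivity
  have hmem : z + δ • v ∈ Metric.ball z ε := by
    rw [Metric.mem_ball, dist_eq_norm]
    have : z + δ • v - z = δ • v := by abel
    rw [this, norm_smul]
    simp only [Real.norm_eq_abs, abs_of_pos hδpos]
    rw [hδ]
    rw [div_mul_eq_mul_div]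
    rw [div_lt_iff₀ (by positivity)]
    nlinarith
  have h1 : (z + δ • v) ∈ {x : ℝ × ℝ | mdot x v = c} := interior_subset (hball hmem)
  have h2 : z ∈ {x : ℝ × ℝ | mdot x v = c} := interior_subset hz'
  simp only [mem_setOf_eq] at h1 h2
  rw [mdot_add_left, h2] at h1
  have h3 : mdot (δ • v) v = δ * mdot v v := mdot_smul_left δ v v
  have h4 : 0 < mdot v v := mdot_self_pos hv
  nlinarith

-- positive convex combination lies in the interior
lemma pos_combo_mem_interior {T : Finset (ℝ × ℝ)} (hT : T.Nonempty)
    (hO : (interior (convexHull ℝ (↑T : Set (ℝ × ℝ)))).Nonempty)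
    (w : ℝ × ℝ → ℝ) (hw : ∀ p ∈ T, 0 < w p) (hsum : ∑ p ∈ T, w p = 1) :
    ∑ p ∈ T, w p • p ∈ interior (convexHull ℝ (↑T : Set (ℝ × ℝ))) := by
  obtain ⟨x0, hx0⟩ := hO
  have hx0' : x0 ∈ convexHull ℝ (↑T : Set (ℝ × ℝ)) := interior_subset hx0
  rw [Finset.convexHull_eq] at hx0'
  obtain ⟨μ, hμ0, hμ1, hμc⟩ := hx0'
  rw [Finset.centerMass_eq_of_sum_1 _ _ hμ1] at hμc
  set t := T.inf' hT w with ht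
  have htpos : 0 < t := (Finset.lt_inf'_iff hT).2 (fun p hp => hw p hp)
  have htle : ∀ p ∈ T, t ≤ w p := fun p hp => Finset.inf'_le _ hp
  have hμle : ∀ p ∈ T, μ p ≤ 1 := by
    intro p hp
    rw [← hμ1]
    exact Finset.single_le_sum (fun q hq => hμ0 q hq) hp
  set w' : ℝ × ℝ → ℝ := fun p => w p * (1 + t) - t * μ p with hw'
  have hz : (∑ p ∈ T, w' p • p) ∈ convexHull ℝ (↑T : Set (ℝ × ℝ)) := by
    rw [Finset.convexHull_eq]
    refine ⟨w', fun p hp => ?_, ?_, ?_⟩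
    · have h1 := htle p hp
      have h2 := hμle p hp
      have h3 := (hw p hp).le
      have h4 := hμ0 p hp
      simp only [hw']
      nlinarith
    · simp only [hw']
      rw [Finset.sum_sub_distrib, ← Finset.sum_mul, ← Finset.mul_sum, hsum, hμ1]
      ring
    · rw [Finset.centerMass_eq_of_sum_1]
      · simp only [id]
      · rw [Finset.sum_sub_distrib, ← Finset.sum_mul, ← Finset.mul_sum, hsum, hμ1]; ring
  have hkey : ∑ p ∈ T, w p • p
      = (t / (1 + t)) • x0 + (1 / (1 + t)) • (∑ p ∈ T, w' p • p) := by
    rw [← hμc, Finset.smul_sum, Finset.smul_sum, ← Finset.sum_add_distrib]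
    apply Finset.sum_congr rfl
    intro p _
    simp only [id_eq, smul_smul]
    rw [← add_smul]
    congr 1
    simp only [hw']
    field_simp; ring
  rw [hkey]
  exact (convex_convexHull ℝ _).combo_interior_closure_mem_interior hx0
    (subset_closure hz) (by positivity) (by positivity)
    (by field_simp; ring)

lemma mPhi_eq_combo (T : Finset (ℝ × ℝ)) (u : ℝ × ℝ) :
    mPhi T u = ∑ p ∈ T, ((mF T u)⁻¹ * mEf p u) • p := by
  rw [mPhi, mNum, Finset.smul_sum]
  exact Finset.sum_congr rfl (fun p _ => smul_smul _ _ _)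

lemma mPhi_mem_interior {T : Finset (ℝ × ℝ)} (hT : T.Nonempty)
    (hO : (interior (convexHull ℝ (↑T : Set (ℝ × ℝ)))).Nonempty) (u : ℝ × ℝ) :
    mPhi T u ∈ interior (convexHull ℝ (↑T : Set (ℝ × ℝ))) := by
  rw [mPhi_eq_combo]
  apply pos_combo_mem_interior hT hO
  · intro p _
    have := mF_pos hT u
    have := mEf_pos p u
    positivity
  · rw [← Finset.mul_sum, ← mF, inv_mul_cancel₀ (mF_pos hT u).ne']

lemma mPhi_injective {T : Finset (ℝ × ℝ)} (hT : T.Nonempty)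
    (hspan : ∀ v : ℝ × ℝ, v ≠ 0 → ∃ p ∈ T, ∃ q ∈ T, mdot p v ≠ mdot q v) :
    Function.Injective (mPhi T) := by
  intro x y hxy
  by_contra hne
  have hv : x - y ≠ 0 := sub_ne_zero.2 hne
  obtain ⟨p, hp, q, hq, hpq⟩ := hspan (x - y) hv
  have := mdot_mPhi_strict hT hp hq hpq (x := x) (y := y)
  rw [hxy] at this
  exact lt_irrefl _ this
-- Part 5 : coercivity and surjectivity
lemma continuous_finset_sup' {X : Type*} [TopologicalSpace X] {ι : Type*} {s : Finset ι}
    (hs : s.Nonempty) (f : ι → X → ℝ) (hf : ∀ i, Continuous (f i)) :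
    Continuous (fun x => s.sup' hs (fun i => f i x)) := by
  refine Finset.Nonempty.cons_induction
    (motive := fun s hs => Continuous fun x => s.sup' hs fun i => f i x)
    (fun a => ?_) (fun a s h hs ih => ?_) hs
  · simpa using hf a
  · have hfun : (fun x => (Finset.cons a s h).sup' (Finset.cons_nonempty h) fun i => f i x)
        = fun x => (f a x) ⊔ (s.sup' hs fun i => f i x) := by
      funext x
      exact Finset.sup'_cons hs (fun i => f i x)
    show Continuous fun x => (Finset.cons a s h).sup' (Finset.cons_nonempty h) fun i => f i x
    rw [hfun]
    exact (hf a).max ih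

lemma mdot_zero_right (x : ℝ × ℝ) : mdot x 0 = 0 := by simp [mdot]

lemma mdot_le_sup' {T : Finset (ℝ × ℝ)} (hT : T.Nonempty) {z : ℝ × ℝ}
    (hz : z ∈ convexHull ℝ (↑T : Set (ℝ × ℝ))) (u : ℝ × ℝ) :
    mdot z u ≤ T.sup' hT (fun p => mdot p u) := by
  have hlin : IsLinearMap ℝ (fun x : ℝ × ℝ => mdot x u) := by
    constructor
    · intro x y; exact mdot_add_left x y u
    · intro c x; simpa using mdot_smul_left c x u
  have hconv : Convex ℝ {x : ℝ × ℝ | mdot x u ≤ T.sup' hT (fun p => mdot p u)} :=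
    convex_halfSpace_le hlin _
  have hsubset : (↑T : Set (ℝ × ℝ)) ⊆ {x : ℝ × ℝ | mdot x u ≤ T.sup' hT (fun p => mdot p u)} := by
    intro p hp
    simp only [mem_setOf_eq]
    exact Finset.le_sup' (fun p => mdot p u) (Finset.mem_coe.1 hp)
  exact convexHull_min hsubset hconv hz

lemma mdot_le_mG {T : Finset (ℝ × ℝ)} (hT : T.Nonempty) {p : ℝ × ℝ} (hp : p ∈ T) (u : ℝ × ℝ) :
    mdot p u ≤ mG T u := by
  have h1 : mEf p u ≤ mF T u := Finset.single_le_sum (fun q _ => (mEf_pos q u).le) hp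
  rw [mG, ← Real.log_exp (mdot p u)]
  exact Real.log_le_log (Real.exp_pos _) h1

lemma sup'_le_mG {T : Finset (ℝ × ℝ)} (hT : T.Nonempty) (u : ℝ × ℝ) :
    T.sup' hT (fun p => mdot p u) ≤ mG T u :=
  Finset.sup'_le hT _ (fun p hp => mdot_le_mG hT hp u)

def mCoer (T : Finset (ℝ × ℝ)) (hT : T.Nonempty) (y u : ℝ × ℝ) : ℝ :=
  T.sup' hT (fun p => mdot p u) - mdot y u

lemma mCoer_le {T : Finset (ℝ × ℝ)} (hT : T.Nonempty) (y u : ℝ × ℝ) :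
    mCoer T hT y u ≤ mG T u - mdot y u := by
  have := sup'_le_mG hT u
  rw [mCoer]; linarith

lemma continuous_mCoer {T : Finset (ℝ × ℝ)} (hT : T.Nonempty) :
    Continuous (fun z : (ℝ × ℝ) × (ℝ × ℝ) => mCoer T hT z.1 z.2) := by
  unfold mCoer
  apply Continuous.sub
  · exact continuous_finset_sup' (X := (ℝ × ℝ) × (ℝ × ℝ)) hT (fun p z => mdot p z.2)
      (fun p => (continuous_mdot p).comp continuous_snd)
  · unfold mdot; fun_prop

lemma mCoer_pos {T : Finset (ℝ × ℝ)} (hT : T.Nonempty) {y u : ℝ × ℝ}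
    (hy : y ∈ interior (convexHull ℝ (↑T : Set (ℝ × ℝ)))) (hu : u ≠ 0) :
    0 < mCoer T hT y u := by
  obtain ⟨ε, hε, hball⟩ := Metric.isOpen_iff.1 isOpen_interior y hy
  have hun : 0 < ‖u‖ := norm_pos_iff.2 hu
  set δ := ε / (2 * ‖u‖) with hδ
  have hδpos : 0 < δ := by positivity
  have hmem : y + δ • u ∈ Metric.ball y ε := by
    rw [Metric.mem_ball, dist_eq_norm]
    have h2 : y + δ • u - y = δ • u := by abel
    rw [h2, norm_smul]
    simp only [Real.norm_eq_abs, abs_of_pos hδpos]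
    rw [hδ, div_mul_eq_mul_div, div_lt_iff₀ (by positivity)]
    nlinarith
  have hz : y + δ • u ∈ convexHull ℝ (↑T : Set (ℝ × ℝ)) := interior_subset (hball hmem)
  have h3 := mdot_le_sup' hT hz u
  rw [mdot_add_left, mdot_smul_left] at h3
  have h4 := mdot_self_pos hu
  rw [mCoer]
  nlinarith

lemma sup'_mul_left {ι : Type*} {s : Finset ι} (hs : s.Nonempty) (f : ι → ℝ) {r : ℝ}
    (hr : 0 < r) : s.sup' hs (fun i => r * f i) = r * s.sup' hs f := by
  apply le_antisymm
  · apply Finset.sup'_le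
    intro p hp
    exact mul_le_mul_of_nonneg_left (Finset.le_sup' f hp) hr.le
  · obtain ⟨p, hp, hps⟩ := Finset.exists_mem_eq_sup' hs f
    rw [hps]
    exact Finset.le_sup' (fun i => r * f i) hp

lemma mCoer_smul {T : Finset (ℝ × ℝ)} (hT : T.Nonempty) (y : ℝ × ℝ) {r : ℝ} (hr : 0 < r)
    (u : ℝ × ℝ) : mCoer T hT y (r • u) = r * mCoer T hT y u := by
  rw [mCoer, mCoer]
  have h1 : ∀ p : ℝ × ℝ, mdot p (r • u) = r * mdot p u := fun p => mdot_smul_right r p u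
  rw [Finset.sup'_congr hT rfl (fun p _ => h1 p), sup'_mul_left hT _ hr, mdot_smul_right]
  ring

lemma coercivity_on {T : Finset (ℝ × ℝ)} (hT : T.Nonempty) {K : Set (ℝ × ℝ)}
    (hK : IsCompact K) (hKO : K ⊆ interior (convexHull ℝ (↑T : Set (ℝ × ℝ))))
    (hKne : K.Nonempty) :
    ∃ c > 0, ∀ y ∈ K, ∀ u : ℝ × ℝ, c * ‖u‖ ≤ mCoer T hT y u := by
  have hsne : (Metric.sphere (0 : ℝ × ℝ) 1).Nonempty := by
    refine ⟨((1 : ℝ), (0 : ℝ)), ?_⟩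
    simp [Prod.norm_def]
  have hcomp : IsCompact (K ×ˢ Metric.sphere (0 : ℝ × ℝ) 1) :=
    hK.prod (isCompact_sphere _ _)
  obtain ⟨z0, hz0, hz0min⟩ := hcomp.exists_isMinOn (hKne.prod hsne)
    (continuous_mCoer hT).continuousOn
  rw [Set.mem_prod] at hz0
  set c := mCoer T hT z0.1 z0.2 with hc
  have hz0norm : ‖z0.2‖ = 1 := by simpa using hz0.2
  have hz0ne : z0.2 ≠ 0 := by
    intro h; rw [h] at hz0norm; simp at hz0norm
  have hcpos : 0 < c := mCoer_pos hT (hKO hz0.1) hz0ne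
  refine ⟨c, hcpos, ?_⟩
  intro y hy u
  rcases eq_or_ne u 0 with rfl | hu
  · simp only [norm_zero, mul_zero, mCoer, mdot_zero_right, sub_zero]
    rw [Finset.sup'_const]
  · have hun : 0 < ‖u‖ := norm_pos_iff.2 hu
    set u' := ‖u‖⁻¹ • u with hu'
    have hu'sphere : u' ∈ Metric.sphere (0 : ℝ × ℝ) 1 := by
      simp only [mem_sphere_iff_norm, sub_zero, hu', norm_smul, norm_inv, norm_norm]
      field_simp
    have hmin := hz0min (Set.mk_mem_prod hy hu'sphere)
    have hrec : u = ‖u‖ • u' := (smul_inv_smul₀ hun.ne' u).symm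
    calc c * ‖u‖ ≤ mCoer T hT y u' * ‖u‖ := by
          apply mul_le_mul_of_nonneg_right _ hun.le
          exact hmin
      _ = mCoer T hT y (‖u‖ • u') := by rw [mCoer_smul hT y hun]; ring
      _ = mCoer T hT y u := by rw [← hrec]

lemma mPhi_surjOn {T : Finset (ℝ × ℝ)} (hT : T.Nonempty) {y : ℝ × ℝ}
    (hy : y ∈ interior (convexHull ℝ (↑T : Set (ℝ × ℝ)))) : ∃ u, mPhi T u = y := by
  obtain ⟨c, hc, hcoer⟩ := coercivity_on hT isCompact_singleton
    (Set.singleton_subset_iff.2 hy) ⟨y, rfl⟩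
  set h : ℝ × ℝ → ℝ := fun u => mG T u - mdot y u with hh
  have hbound : ∀ u, c * ‖u‖ ≤ h u := by
    intro u
    have h1 := hcoer y rfl u
    have h2 := mCoer_le hT y u
    simp only [hh]
    linarith
  have hcont : Continuous h := (continuous_mG hT).sub (continuous_mdot y)
  have h00 : 0 ≤ h 0 := by have := hbound 0; simpa using this
  set R := (h 0 + 1) / c with hR
  have hRpos : 0 < R := by positivity
  obtain ⟨u0, hu0B, hmin⟩ := (isCompact_closedBall (0 : ℝ × ℝ) R).exists_isMinOn
    ⟨0, Metric.mem_closedBall_self hRpos.le⟩ hcont.continuousOn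
  have hglobal : ∀ u, h u0 ≤ h u := by
    intro u
    by_cases hu : u ∈ Metric.closedBall (0 : ℝ × ℝ) R
    · exact hmin hu
    · have hgt : R < ‖u‖ := by
        rw [Metric.mem_closedBall, dist_zero_right, not_le] at hu
        exact hu
      have h1 := hbound u
      have h2 : h u0 ≤ h 0 := hmin (Metric.mem_closedBall_self hRpos.le)
      have h3 : c * R < c * ‖u‖ := by exact (mul_lt_mul_iff_right₀ hc).2 hgt
      have h4 : c * R = h 0 + 1 := by rw [hR]; field_simp
      linarith
  have hloc : IsLocalMin h u0 := Filter.Eventually.of_forall hglobal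
  have hder : HasFDerivAt h
      (((mF T u0)⁻¹ • ∑ t ∈ T, mEf t u0 • mdotCLM t) - mdotCLM y) u0 :=
    (hasFDerivAt_mG hT u0).sub (hasFDerivAt_mdot y u0)
  have hzero := hloc.hasFDerivAt_eq_zero hder
  refine ⟨u0, ?_⟩
  have h1 : ∀ w, mdot (mPhi T u0) w = mdot y w := by
    intro w
    have h2 := ContinuousLinearMap.ext_iff.1 hzero w
    rw [ContinuousLinearMap.sub_apply, mG_grad_apply, mdotCLM_apply] at h2
    have h3 : (0 : (ℝ × ℝ) →L[ℝ] ℝ) w = 0 := rfl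
    rw [h3] at h2
    linarith
  have e1 := h1 (1, 0)
  have e2 := h1 (0, 1)
  simp only [mdot, mul_one, mul_zero, add_zero, zero_add] at e1 e2
  exact Prod.ext e1 e2
-- Part 6 : the inverse map and its continuity
def mPhiInv (T : Finset (ℝ × ℝ)) (y : ℝ × ℝ) : ℝ × ℝ :=
  haveI := Classical.propDecidable (∃ u, mPhi T u = y)
  if h : ∃ u, mPhi T u = y then h.choose else 0

lemma mPhiInv_spec {T : Finset (ℝ × ℝ)} {y : ℝ × ℝ} (h : ∃ u, mPhi T u = y) :
    mPhi T (mPhiInv T y) = y := by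
  unfold mPhiInv
  rw [dif_pos h]
  exact h.choose_spec

lemma mPhiInv_left {T : Finset (ℝ × ℝ)} (hT : T.Nonempty)
    (hspan : ∀ v : ℝ × ℝ, v ≠ 0 → ∃ p ∈ T, ∃ q ∈ T, mdot p v ≠ mdot q v) (u : ℝ × ℝ) :
    mPhiInv T (mPhi T u) = u :=
  mPhi_injective hT hspan (mPhiInv_spec ⟨u, rfl⟩)

lemma mG_convex_bound {T : Finset (ℝ × ℝ)} (hT : T.Nonempty)
    (hspan : ∀ v : ℝ × ℝ, v ≠ 0 → ∃ p ∈ T, ∃ q ∈ T, mdot p v ≠ mdot q v) (u : ℝ × ℝ) :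
    mG T u - mdot (mPhi T u) u ≤ mG T 0 := by
  rcases eq_or_ne u 0 with rfl | hu
  · rw [mdot_zero_right]; linarith
  · set ψ : ℝ → ℝ := fun t => mG T (u + t • (-u)) with hψ
    have hcont : ContinuousOn ψ (Icc 0 1) := by
      apply Continuous.continuousOn
      exact (continuous_mG hT).comp (by continuity)
    have hder : ∀ t ∈ Ioo (0 : ℝ) 1, HasDerivAt ψ (etaF T u (-u) t) t :=
      fun t _ => hasDerivAt_mG_line hT u (-u) t
    obtain ⟨c, hc01, hceq⟩ := exists_hasDerivAt_eq_slope ψ (etaF T u (-u)) zero_lt_one hcont hder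
    obtain ⟨p, hp, q, hq, hpq⟩ := hspan (-u) (neg_ne_zero.2 hu)
    have hmono := (etaF_strictMono hT hp hq hpq (b := u)).monotone
    have h0c : etaF T u (-u) 0 ≤ etaF T u (-u) c := hmono hc01.1.le
    have hψ1 : ψ 1 = mG T 0 := by simp [hψ]
    have hψ0 : ψ 0 = mG T u := by simp [hψ]
    have heta0 : etaF T u (-u) 0 = - mdot (mPhi T u) u := by
      rw [etaF, mdot_neg_right]
      norm_num
    rw [hψ1, hψ0] at hceq
    rw [heta0] at h0c
    rw [sub_zero, div_one] at hceq
    linarith [hceq ▸ h0c]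

lemma continuousOn_mPhiInv {T : Finset (ℝ × ℝ)} (hT : T.Nonempty)
    (hO : (interior (convexHull ℝ (↑T : Set (ℝ × ℝ)))).Nonempty) :
    ContinuousOn (mPhiInv T) (interior (convexHull ℝ (↑T : Set (ℝ × ℝ)))) := by
  have hspan := hspan_of_interior hT hO
  intro y0 hy0
  obtain ⟨r, hr, hball⟩ : ∃ r > 0,
      Metric.closedBall y0 r ⊆ interior (convexHull ℝ (↑T : Set (ℝ × ℝ))) := by
    obtain ⟨ε, hε, hb⟩ := Metric.isOpen_iff.1 isOpen_interior y0 hy0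
    exact ⟨ε / 2, by positivity, (Metric.closedBall_subset_ball (by linarith)).trans hb⟩
  obtain ⟨c, hc, hcoer⟩ := coercivity_on hT (isCompact_closedBall y0 r)
    hball ⟨y0, Metric.mem_closedBall_self hr.le⟩
  set R := mG T 0 / c with hRdef
  have hpre : ∀ u : ℝ × ℝ, mPhi T u ∈ Metric.closedBall y0 r → ‖u‖ ≤ R := by
    intro u hu
    have h1 : mCoer T hT (mPhi T u) u ≤ mG T 0 := by
      have h2 := mCoer_le hT (mPhi T u) u
      have h3 := mG_convex_bound hT hspan u
      linarith
    have h4 := hcoer _ hu u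
    rw [hRdef, le_div_iff₀ hc]
    nlinarith
  rw [ContinuousWithinAt, Filter.tendsto_iff_seq_tendsto]
  intro yseq hyseq
  rw [tendsto_nhdsWithin_iff] at hyseq
  obtain ⟨hy_lim, hy_mem⟩ := hyseq
  have hball_ev : ∀ᶠ n in Filter.atTop, yseq n ∈ Metric.closedBall y0 r := by
    filter_upwards [hy_lim (Metric.closedBall_mem_nhds y0 hr)] with n hn using hn
  obtain ⟨N, hN⟩ := Filter.eventually_atTop.1 (hball_ev.and hy_mem)
  apply Filter.tendsto_of_subseq_tendsto
  intro ns hns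
  obtain ⟨N', hN'⟩ := Filter.eventually_atTop.1 (hns.eventually (Filter.eventually_ge_atTop N))
  set v : ℕ → ℝ × ℝ := fun n => mPhiInv T (yseq (ns (n + N'))) with hv
  have hvmem : ∀ n, v n ∈ Metric.closedBall (0 : ℝ × ℝ) R := by
    intro n
    have hidx := hN' (n + N') (Nat.le_add_left N' n)
    obtain ⟨hb, hm⟩ := hN _ hidx
    rw [mem_closedBall_zero_iff]
    exact hpre _ (by rw [mPhiInv_spec (mPhi_surjOn hT hm)]; exact hb)
  obtain ⟨a, _, ms, hms, hvlim⟩ := (isCompact_closedBall (0 : ℝ × ℝ) R).tendsto_subseq hvmem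
  have hidx2 : ∀ n, N ≤ ns (ms n + N') := fun n => hN' _ (Nat.le_add_left N' (ms n))
  have hPhi_v : ∀ n : ℕ, mPhi T (v (ms n)) = yseq (ns (ms n + N')) := fun n =>
    mPhiInv_spec (mPhi_surjOn hT (hN _ (hidx2 n)).2)
  have hseq_to : Filter.Tendsto (fun n => yseq (ns (ms n + N'))) Filter.atTop (𝓝 y0) := by
    apply hy_lim.comp
    apply hns.comp
    exact Filter.tendsto_atTop_mono (fun n => Nat.le_add_right _ _) hms.tendsto_atTop
  have hPa : mPhi T a = y0 := by
    have h1 : Filter.Tendsto (fun n => mPhi T (v (ms n))) Filter.atTop (𝓝 (mPhi T a)) :=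
      ((continuous_mPhi hT).tendsto a).comp hvlim
    have h2 : Filter.Tendsto (fun n => mPhi T (v (ms n))) Filter.atTop (𝓝 y0) := by
      simpa only [hPhi_v] using hseq_to
    exact tendsto_nhds_unique h1 h2
  have haeq : a = mPhiInv T y0 :=
    mPhi_injective hT hspan (by rw [hPa, mPhiInv_spec (mPhi_surjOn hT hy0)])
  refine ⟨fun n => ms n + N', ?_⟩
  have hfin := hvlim
  rw [haeq] at hfin
  exact hfin
-- Part 7 : lattice polygon bridge

lemma latticeEmb_injective : Function.Injective latticeEmb := by
  intro p q h
  rw [latticeEmb, latticeEmb, Prod.mk.injEq] at h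
  exact Prod.ext (by exact_mod_cast h.1) (by exact_mod_cast h.2)

lemma zpow_eq_exp {x : ℝ} (hx : 0 < x) (n : ℤ) :
    x ^ n = Real.exp (n * Real.log x) := by
  rw [← Real.rpow_intCast x n, Real.rpow_def_of_pos hx, mul_comm]

lemma quad_bound_convex (M : ℝ) : Convex ℝ {x : ℝ × ℝ | |x.1| ≤ M ∧ |x.2| ≤ M} := by
  intro u hu v hv a b ha hb hab
  have h1 : (a • u + b • v).1 = a * u.1 + b * v.1 := rfl
  have h2 : (a • u + b • v).2 = a * u.2 + b * v.2 := rfl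
  constructor
  · rw [h1]
    calc |a * u.1 + b * v.1| ≤ |a * u.1| + |b * v.1| := abs_add_le _ _
      _ = a * |u.1| + b * |v.1| := by
          rw [abs_mul, abs_mul, abs_of_nonneg ha, abs_of_nonneg hb]
      _ ≤ a * M + b * M :=
          add_le_add (mul_le_mul_of_nonneg_left hu.1 ha) (mul_le_mul_of_nonneg_left hv.1 hb)
      _ = M := by rw [← add_mul, hab, one_mul]
  · rw [h2]
    calc |a * u.2 + b * v.2| ≤ |a * u.2| + |b * v.2| := abs_add_le _ _
      _ = a * |u.2| + b * |v.2| := by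
          rw [abs_mul, abs_mul, abs_of_nonneg ha, abs_of_nonneg hb]
      _ ≤ a * M + b * M :=
          add_le_add (mul_le_mul_of_nonneg_left hu.2 ha) (mul_le_mul_of_nonneg_left hv.2 hb)
      _ = M := by rw [← add_mul, hab, one_mul]

lemma lattice_finite (S : Finset (ℤ × ℤ)) (Θ : Set (ℝ × ℝ))
    (hΘ : Θ = convexHull ℝ (latticeEmb '' (S : Set (ℤ × ℤ)))) :
    {p : ℤ × ℤ | latticeEmb p ∈ Θ}.Finite := by
  rcases S.eq_empty_or_nonempty with rfl | hSne
  · have hempty : {p : ℤ × ℤ | latticeEmb p ∈ Θ} = ∅ := by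
      rw [hΘ]
      simp [convexHull_empty]
    rw [hempty]; exact Set.finite_empty
  · set M : ℝ := S.sup' hSne (fun p => max |(p.1 : ℝ)| |(p.2 : ℝ)|) with hM
    have hbound : ∀ x ∈ Θ, |x.1| ≤ M ∧ |x.2| ≤ M := by
      intro x hx
      rw [hΘ] at hx
      have hgen : latticeEmb '' (S : Set (ℤ × ℤ)) ⊆ {x : ℝ × ℝ | |x.1| ≤ M ∧ |x.2| ≤ M} := by
        rintro _ ⟨p, hp, rfl⟩
        have hps := Finset.le_sup' (fun p : ℤ × ℤ => max |(p.1 : ℝ)| |(p.2 : ℝ)|)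
          (Finset.mem_coe.1 hp)
        constructor
        · exact le_trans (le_max_left _ _) hps
        · exact le_trans (le_max_right _ _) hps
      exact convexHull_min hgen (quad_bound_convex M) hx
    apply Set.Finite.subset (Set.finite_Icc ((-⌈M⌉, -⌈M⌉) : ℤ × ℤ) ((⌈M⌉, ⌈M⌉) : ℤ × ℤ))
    intro p hp
    obtain ⟨h1, h2⟩ := hbound _ hp
    simp only [latticeEmb] at h1 h2
    have hc1 : (p.1 : ℝ) ≤ (⌈M⌉ : ℝ) := le_trans (le_abs_self _) (h1.trans (Int.le_ceil M))
    have hc2 : (p.2 : ℝ) ≤ (⌈M⌉ : ℝ) := le_trans (le_abs_self _) (h2.trans (Int.le_ceil M))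
    have hc3 : ((-⌈M⌉ : ℤ) : ℝ) ≤ (p.1 : ℝ) := by
      push_cast
      have := neg_abs_le ((p.1 : ℝ))
      have := Int.le_ceil M
      linarith
    have hc4 : ((-⌈M⌉ : ℤ) : ℝ) ≤ (p.2 : ℝ) := by
      push_cast
      have := neg_abs_le ((p.2 : ℝ))
      have := Int.le_ceil M
      linarith
    rw [Set.mem_Icc]
    constructor
    · exact ⟨by exact_mod_cast hc3, by exact_mod_cast hc4⟩
    · exact ⟨by exact_mod_cast hc1, by exact_mod_cast hc2⟩

lemma convex_nonnegQuad : Convex ℝ {x : ℝ × ℝ | 0 ≤ x.1 ∧ 0 ≤ x.2} := by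
  intro u hu v hv a b ha hb hab
  have h1 : (a • u + b • v).1 = a * u.1 + b * v.1 := rfl
  have h2 : (a • u + b • v).2 = a * u.2 + b * v.2 := rfl
  constructor
  · rw [h1]; exact add_nonneg (mul_nonneg ha hu.1) (mul_nonneg hb hv.1)
  · rw [h2]; exact add_nonneg (mul_nonneg ha hu.2) (mul_nonneg hb hv.2)

lemma interior_subset_posQuad {Θ : Set (ℝ × ℝ)}
    (hsub : Θ ⊆ {x : ℝ × ℝ | 0 ≤ x.1 ∧ 0 ≤ x.2}) : interior Θ ⊆ posQuad := by
  intro y hy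
  obtain ⟨ε, hε, hball⟩ := Metric.isOpen_iff.1 isOpen_interior y hy
  have key : ∀ z : ℝ × ℝ, dist z y < ε → (0 ≤ z.1 ∧ 0 ≤ z.2) := by
    intro z hz
    exact hsub (interior_subset (hball hz))
  constructor
  · have h1 := key (y.1 - ε / 2, y.2) (by
      rw [Prod.dist_eq]
      apply max_lt
      · rw [Real.dist_eq]
        have he : y.1 - ε / 2 - y.1 = -(ε / 2) := by ring
        rw [he, abs_neg, abs_of_pos (by positivity)]
        linarith
      · rw [Real.dist_eq]
        simp only [sub_self, abs_zero]
        linarith)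
    have := h1.1
    simp only at this
    show (0 : ℝ) < y.1
    linarith
  · have h1 := key (y.1, y.2 - ε / 2) (by
      rw [Prod.dist_eq]
      apply max_lt
      · rw [Real.dist_eq]
        simp only [sub_self, abs_zero]
        linarith
      · rw [Real.dist_eq]
        have he : y.2 - ε / 2 - y.2 = -(ε / 2) := by ring
        rw [he, abs_neg, abs_of_pos (by positivity)]
        linarith)
    have := h1.2
    simp only at this
    show (0 : ℝ) < y.2
    linarith

lemma momentMap_eq_mPhi (Θ : Set (ℝ × ℝ)) (L : Finset (ℤ × ℤ))
    (hL : ∀ p : ℤ × ℤ, p ∈ L ↔ latticeEmb p ∈ Θ) {q : ℝ × ℝ} (hq : q ∈ posQuad) :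
    momentMap Θ q = mPhi (L.image latticeEmb) (Real.log q.1, Real.log q.2) := by
  set u : ℝ × ℝ := (Real.log q.1, Real.log q.2) with hu
  have hpow : ∀ p : ℤ × ℤ, q.1 ^ p.1 * q.2 ^ p.2 = mEf (latticeEmb p) u := by
    intro p
    rw [mEf, mdot, latticeEmb]
    simp only [hu]
    rw [zpow_eq_exp hq.1, zpow_eq_exp hq.2, ← Real.exp_add]
  have hbr : ∀ (g : ℤ × ℤ → ℝ × ℝ),
      (∑ᶠ (p : ℤ × ℤ) (_ : latticeEmb p ∈ Θ), g p) = ∑ p ∈ L, g p := by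
    intro g
    have h1 : ∀ p : ℤ × ℤ, (latticeEmb p ∈ Θ) = (p ∈ (↑L : Set (ℤ × ℤ))) := by
      intro p
      apply propext
      rw [Finset.mem_coe, hL]
    calc (∑ᶠ (p : ℤ × ℤ) (_ : latticeEmb p ∈ Θ), g p)
        = ∑ᶠ (p : ℤ × ℤ) (_ : p ∈ (↑L : Set (ℤ × ℤ))), g p := by
          apply finsum_congr
          intro p
          rw [h1 p]
      _ = ∑ p ∈ L, g p := finsum_mem_coe_finset g L
  have hbr' : ∀ (g : ℤ × ℤ → ℝ),
      (∑ᶠ (p : ℤ × ℤ) (_ : latticeEmb p ∈ Θ), g p) = ∑ p ∈ L, g p := by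
    intro g
    have h1 : ∀ p : ℤ × ℤ, (latticeEmb p ∈ Θ) = (p ∈ (↑L : Set (ℤ × ℤ))) := by
      intro p
      apply propext
      rw [Finset.mem_coe, hL]
    calc (∑ᶠ (p : ℤ × ℤ) (_ : latticeEmb p ∈ Θ), g p)
        = ∑ᶠ (p : ℤ × ℤ) (_ : p ∈ (↑L : Set (ℤ × ℤ))), g p := by
          apply finsum_congr
          intro p
          rw [h1 p]
      _ = ∑ p ∈ L, g p := finsum_mem_coe_finset g L
  rw [momentMap, hbr' (fun p => q.1 ^ p.1 * q.2 ^ p.2),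
    hbr (fun p => (q.1 ^ p.1 * q.2 ^ p.2) • latticeEmb p)]
  have hinj : Set.InjOn latticeEmb ↑L := fun a _ b _ h => latticeEmb_injective h
  rw [mPhi, mF, mNum, Finset.sum_image hinj, Finset.sum_image hinj]
  congr 1
  · congr 1
    exact Finset.sum_congr rfl (fun p _ => hpow p)
  · exact Finset.sum_congr rfl (fun p _ => by rw [hpow p])
-- Part 8 : the symmetric extension and the main theorem

lemma bool_eq_of_iff {a b : Bool} (h : a = true ↔ b = true) : a = b := by
  cases a <;> cases b <;> simp_all

lemma quadRefl_involutive (s : Bool × Bool) (q : ℝ × ℝ) :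
    quadRefl s (quadRefl s q) = q := by
  rcases s with ⟨s1, s2⟩
  cases s1 <;> cases s2 <;> simp [quadRefl]

lemma quadRefl_mem_realTorus {s : Bool × Bool} {y : ℝ × ℝ} (hy : y ∈ posQuad) :
    quadRefl s y ∈ realTorus := by
  rcases s with ⟨s1, s2⟩
  obtain ⟨h1, h2⟩ := hy
  constructor
  · cases s1 <;> simp [quadRefl] <;> intro h <;> simp [h] at h1 <;> linarith
  · cases s2 <;> simp [quadRefl] <;> intro h <;> simp [h] at h2 <;> linarith

lemma abs_quadRefl (s : Bool × Bool) {y : ℝ × ℝ} (hy : y ∈ posQuad) :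
    ((|(quadRefl s y).1|, |(quadRefl s y).2|) : ℝ × ℝ) = y := by
  rcases s with ⟨s1, s2⟩
  obtain ⟨h1, h2⟩ := hy
  have e1 : |(quadRefl (s1, s2) y).1| = y.1 := by
    cases s1 <;> simp [quadRefl, abs_of_pos h1]
  have e2 : |(quadRefl (s1, s2) y).2| = y.2 := by
    cases s2 <;> simp [quadRefl, abs_of_pos h2]
  exact Prod.ext e1 e2

lemma tilde_eval (f : ℝ × ℝ → ℝ × ℝ) (s : Bool × Bool) {y : ℝ × ℝ} (hy : y ∈ posQuad) :
    ((Real.sign (quadRefl s y).1 * (f (|(quadRefl s y).1|, |(quadRefl s y).2|)).1,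
      Real.sign (quadRefl s y).2 * (f (|(quadRefl s y).1|, |(quadRefl s y).2|)).2) : ℝ × ℝ)
    = quadRefl s (f y) := by
  rw [abs_quadRefl s hy]
  rcases s with ⟨s1, s2⟩
  obtain ⟨h1, h2⟩ := hy
  have hs1 : Real.sign (quadRefl (s1, s2) y).1 = if s1 then -1 else 1 := by
    cases s1
    · simpa [quadRefl] using Real.sign_of_pos h1
    · simpa [quadRefl] using Real.sign_of_neg (neg_lt_zero.2 h1)
  have hs2 : Real.sign (quadRefl (s1, s2) y).2 = if s2 then -1 else 1 := by
    cases s2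
    · simpa [quadRefl] using Real.sign_of_pos h2
    · simpa [quadRefl] using Real.sign_of_neg (neg_lt_zero.2 h2)
  rw [hs1, hs2]
  cases s1 <;> cases s2 <;> simp [quadRefl]

lemma torus_decomp {q : ℝ × ℝ} (hq : q ∈ realTorus) :
    ∃ s : Bool × Bool, ∃ x : ℝ × ℝ, x ∈ posQuad ∧ q = quadRefl s x := by
  refine ⟨(decide (q.1 < 0), decide (q.2 < 0)), (|q.1|, |q.2|),
    ⟨abs_pos.2 hq.1, abs_pos.2 hq.2⟩, ?_⟩
  have e1 : (if decide (q.1 < 0) = true then -|q.1| else |q.1|) = q.1 := by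
    by_cases h : q.1 < 0
    · simp [h, abs_of_neg h]
    · have hpos : 0 < q.1 := lt_of_le_of_ne (not_lt.1 h) (Ne.symm hq.1)
      simp [h, abs_of_pos hpos]
  have e2 : (if decide (q.2 < 0) = true then -|q.2| else |q.2|) = q.2 := by
    by_cases h : q.2 < 0
    · simp [h, abs_of_neg h]
    · have hpos : 0 < q.2 := lt_of_le_of_ne (not_lt.1 h) (Ne.symm hq.2)
      simp [h, abs_of_pos hpos]
  refine Prod.ext ?_ ?_
  · exact e1.symm
  · exact e2.symm

lemma refl_neg_iff (s : Bool × Bool) {y : ℝ × ℝ} (hy : y ∈ posQuad) :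
    (((quadRefl s y).1 < 0) ↔ s.1 = true) ∧ (((quadRefl s y).2 < 0) ↔ s.2 = true) := by
  rcases s with ⟨s1, s2⟩
  obtain ⟨h1, h2⟩ := hy
  constructor
  · cases s1
    · simp [quadRefl]; linarith
    · simp [quadRefl]; linarith
  · cases s2
    · simp [quadRefl]; linarith
    · simp [quadRefl]; linarith

lemma cont_sign_abs {f : ℝ × ℝ → ℝ × ℝ} {A B : Set (ℝ × ℝ)}
    (hA : ∀ p ∈ A, p.1 ≠ 0 ∧ p.2 ≠ 0)
    (hmaps : ∀ p ∈ A, ((|p.1|, |p.2|) : ℝ × ℝ) ∈ B) (hf : ContinuousOn f B) :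
    ContinuousOn (fun p : ℝ × ℝ => ((Real.sign p.1 * (f (|p.1|, |p.2|)).1,
      Real.sign p.2 * (f (|p.1|, |p.2|)).2) : ℝ × ℝ)) A := by
  have habs : Continuous (fun p : ℝ × ℝ => ((|p.1|, |p.2|) : ℝ × ℝ)) :=
    (continuous_abs.comp continuous_fst).prodMk (continuous_abs.comp continuous_snd)
  have hcomp : ContinuousOn (fun p : ℝ × ℝ => f (|p.1|, |p.2|)) A :=
    hf.comp habs.continuousOn hmaps
  have hsign : ∀ (g : ℝ × ℝ → ℝ), Continuous g → (∀ p ∈ A, g p ≠ 0) →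
      ContinuousOn (fun p : ℝ × ℝ => Real.sign (g p)) A := by
    intro g hg hgne p hp
    apply ContinuousAt.continuousWithinAt
    rcases (hgne p hp).lt_or_gt with h | h
    · have hev : (fun x : ℝ × ℝ => Real.sign (g x)) =ᶠ[𝓝 p] (fun _ => (-1 : ℝ)) := by
        filter_upwards [(isOpen_lt hg continuous_const).eventually_mem h] with x hx
        exact Real.sign_of_neg hx
      exact hev.continuousAt
    · have hev : (fun x : ℝ × ℝ => Real.sign (g x)) =ᶠ[𝓝 p] (fun _ => (1 : ℝ)) := by
        filter_upwards [(isOpen_lt continuous_const hg).eventually_mem h] with x hx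
        exact Real.sign_of_pos hx
      exact hev.continuousAt
  have hsign1 := hsign (fun p => p.1) continuous_fst (fun p hp => (hA p hp).1)
  have hsign2 := hsign (fun p => p.2) continuous_snd (fun p hp => (hA p hp).2)
  have hc1 : ContinuousOn (fun p : ℝ × ℝ => (f (|p.1|, |p.2|)).1) A :=
    continuous_fst.comp_continuousOn hcomp
  have hc2 : ContinuousOn (fun p : ℝ × ℝ => (f (|p.1|, |p.2|)).2) A :=
    continuous_snd.comp_continuousOn hcomp
  exact (hsign1.mul hc1).prodMk (hsign2.mul hc2)
/-- for a lattice polygon `Θ ⊆ ℝ²_{≥0}` with nonempty interior, the symmetric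
extension φ̃_Θ of the moment map is well defined on (ℝ*)² (it satisfies the equivariance
φ̃_Θ(ρ(q)) = ρ(φ_Θ(q)) for all q in the positive quadrant and all ρ ∈ S) and it is a
homeomorphism of (ℝ*)² onto ⋃_{ρ∈S} ρ(int Θ); moreover the four sets ρ(int Θ) are pairwise
disjoint (in particular int Θ ⊆ ℝ²_{>0}). -/
theorem tildeMomentMap_is_homeomorphism
    (S : Finset (ℤ × ℤ)) (hS : ∀ p ∈ S, 0 ≤ p.1 ∧ 0 ≤ p.2)
    (Θ : Set (ℝ × ℝ)) (hΘ : Θ = convexHull ℝ (latticeEmb '' (S : Set (ℤ × ℤ))))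
    (hdim : (interior Θ).Nonempty) :
    (∀ s : Bool × Bool, ∀ q ∈ posQuad, tildeMomentMap Θ (quadRefl s q) = quadRefl s (momentMap Θ q)) ∧
    interior Θ ⊆ posQuad ∧
    (∀ s s' : Bool × Bool, s ≠ s' →
      Disjoint (quadRefl s '' interior Θ) (quadRefl s' '' interior Θ)) ∧
    Set.InjOn (tildeMomentMap Θ) realTorus ∧
    ContinuousOn (tildeMomentMap Θ) realTorus ∧
    tildeMomentMap Θ '' realTorus = tildeSet (interior Θ) ∧
    ∃ ψ : ℝ × ℝ → ℝ × ℝ,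
      ContinuousOn ψ (tildeSet (interior Θ)) ∧
      (∀ q ∈ realTorus, ψ (tildeMomentMap Θ q) = q) ∧
      (∀ p ∈ tildeSet (interior Θ), ψ p ∈ realTorus ∧ tildeMomentMap Θ (ψ p) = p) := by
  classical
  -- the finite set of lattice points of Θ and its real image
  have hSne : S.Nonempty := by
    rcases hdim with ⟨x, hx⟩
    have hxΘ := interior_subset hx
    rcases S.eq_empty_or_nonempty with rfl | h
    · rw [hΘ] at hxΘ
      simp [convexHull_empty] at hxΘ
    · exact h
  set L : Finset (ℤ × ℤ) := (lattice_finite S Θ hΘ).toFinset with hLdef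
  have hL : ∀ p : ℤ × ℤ, p ∈ L ↔ latticeEmb p ∈ Θ := by
    intro p
    rw [hLdef]
    exact Set.Finite.mem_toFinset _
  set T : Finset (ℝ × ℝ) := L.image latticeEmb with hTdef
  have hTΘ : Θ = convexHull ℝ (↑T : Set (ℝ × ℝ)) := by
    apply Set.Subset.antisymm
    · rw [hΘ]
      apply convexHull_mono
      rintro _ ⟨p, hp, rfl⟩
      have hmem : latticeEmb p ∈ Θ := by
        rw [hΘ]
        exact subset_convexHull ℝ _ ⟨p, hp, rfl⟩
      exact Finset.mem_coe.2 (Finset.mem_image_of_mem _ ((hL p).2 hmem))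
    · apply convexHull_min
      · intro x hx
        obtain ⟨p, hp, rfl⟩ := Finset.mem_image.1 (Finset.mem_coe.1 hx)
        exact (hL p).1 hp
      · rw [hΘ]
        exact convex_convexHull ℝ _
  have hT : T.Nonempty := by
    obtain ⟨p, hp⟩ := hSne
    have hpΘ : latticeEmb p ∈ Θ := by
      rw [hΘ]
      exact subset_convexHull ℝ _ ⟨p, hp, rfl⟩
    exact ⟨latticeEmb p, Finset.mem_image_of_mem _ ((hL p).2 hpΘ)⟩
  have hO : (interior (convexHull ℝ (↑T : Set (ℝ × ℝ)))).Nonempty := by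
    rw [← hTΘ]; exact hdim
  have hspan := hspan_of_interior hT hO
  -- positivity
  have hΘnn : Θ ⊆ {x : ℝ × ℝ | 0 ≤ x.1 ∧ 0 ≤ x.2} := by
    rw [hΘ]
    apply convexHull_min _ convex_nonnegQuad
    rintro _ ⟨p, hp, rfl⟩
    obtain ⟨h1, h2⟩ := hS p (Finset.mem_coe.1 hp)
    refine ⟨?_, ?_⟩
    · simp only [latticeEmb]
      exact_mod_cast h1
    · simp only [latticeEmb]
      exact_mod_cast h2
  have hIntPos : interior Θ ⊆ posQuad := interior_subset_posQuad hΘnn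
  -- bridge between momentMap and mPhi
  have hbridge : ∀ q ∈ posQuad, momentMap Θ q = mPhi T (Real.log q.1, Real.log q.2) :=
    fun q hq => momentMap_eq_mPhi Θ L hL hq
  have hbridge' : ∀ u : ℝ × ℝ, mPhi T u = momentMap Θ (Real.exp u.1, Real.exp u.2) := by
    intro u
    have h := hbridge (Real.exp u.1, Real.exp u.2) ⟨Real.exp_pos _, Real.exp_pos _⟩
    rw [h]
    simp [Real.log_exp]
  -- properties of the moment map on the positive quadrant
  have hMMmem : ∀ q ∈ posQuad, momentMap Θ q ∈ interior Θ := by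
    intro q hq
    rw [hbridge q hq, hTΘ]
    exact mPhi_mem_interior hT hO _
  have hMMinj : Set.InjOn (momentMap Θ) posQuad := by
    intro q hq q' hq' h
    rw [hbridge q hq, hbridge q' hq'] at h
    have h2 := mPhi_injective hT hspan h
    have e1 : Real.log q.1 = Real.log q'.1 := congrArg Prod.fst h2
    have e2 : Real.log q.2 = Real.log q'.2 := congrArg Prod.snd h2
    have f1 : q.1 = q'.1 := by rw [← Real.exp_log hq.1, ← Real.exp_log hq'.1, e1]
    have f2 : q.2 = q'.2 := by rw [← Real.exp_log hq.2, ← Real.exp_log hq'.2, e2]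
    exact Prod.ext f1 f2
  have hMMsurj : ∀ y ∈ interior Θ, ∃ q ∈ posQuad, momentMap Θ q = y := by
    intro y hy
    obtain ⟨u, hu⟩ := mPhi_surjOn hT (show y ∈ interior (convexHull ℝ (↑T : Set (ℝ × ℝ))) by
      rw [← hTΘ]; exact hy)
    exact ⟨(Real.exp u.1, Real.exp u.2), ⟨Real.exp_pos _, Real.exp_pos _⟩,
      by rw [← hbridge' u, hu]⟩
  have hMMcont : ContinuousOn (momentMap Θ) posQuad := by
    have hlog : ContinuousOn (fun q : ℝ × ℝ => ((Real.log q.1, Real.log q.2) : ℝ × ℝ)) posQuad := by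
      intro q hq
      apply ContinuousAt.continuousWithinAt
      exact ((Real.continuousAt_log hq.1.ne').comp continuousAt_fst).prodMk
        ((Real.continuousAt_log hq.2.ne').comp continuousAt_snd)
    exact ((continuous_mPhi hT).comp_continuousOn hlog).congr (fun q hq => hbridge q hq)
  -- the inverse of the moment map on the interior
  set Ψ : ℝ × ℝ → ℝ × ℝ := fun y => (Real.exp (mPhiInv T y).1, Real.exp (mPhiInv T y).2)
    with hΨdef
  have hΨmem : ∀ y, Ψ y ∈ posQuad := fun y => ⟨Real.exp_pos _, Real.exp_pos _⟩
  have hΨcont : ContinuousOn Ψ (interior Θ) := by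
    rw [hTΘ]
    exact ((Real.continuous_exp.comp continuous_fst).prodMk
      (Real.continuous_exp.comp continuous_snd)).comp_continuousOn
      (continuousOn_mPhiInv hT hO)
  have hΨright : ∀ y ∈ interior Θ, momentMap Θ (Ψ y) = y := by
    intro y hy
    have hy' : y ∈ interior (convexHull ℝ (↑T : Set (ℝ × ℝ))) := by rw [← hTΘ]; exact hy
    calc momentMap Θ (Ψ y) = mPhi T (mPhiInv T y) := (hbridge' _).symm
      _ = y := mPhiInv_spec (mPhi_surjOn hT hy')
  have hΨleft : ∀ q ∈ posQuad, Ψ (momentMap Θ q) = q := by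
    intro q hq
    rw [hbridge q hq, hΨdef]
    simp only
    rw [mPhiInv_left hT hspan]
    exact Prod.ext (Real.exp_log hq.1) (Real.exp_log hq.2)
  -- equivariance
  have heqv : ∀ s : Bool × Bool, ∀ q ∈ posQuad,
      tildeMomentMap Θ (quadRefl s q) = quadRefl s (momentMap Θ q) := by
    intro s q hq
    exact tilde_eval (momentMap Θ) s hq
  -- disjointness
  have hdisj : ∀ s s' : Bool × Bool, s ≠ s' →
      Disjoint (quadRefl s '' interior Θ) (quadRefl s' '' interior Θ) := by
    intro s s' hss
    rw [Set.disjoint_left]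
    rintro x ⟨y, hy, rfl⟩ ⟨y', hy', heq⟩
    have hyP := hIntPos hy
    have hy'P := hIntPos hy'
    have hiff := refl_neg_iff s hyP
    have hiff' := refl_neg_iff s' hy'P
    rw [heq] at hiff'
    apply hss
    have h1 : s.1 = s'.1 := bool_eq_of_iff (by rw [← hiff.1, ← hiff'.1])
    have h2 : s.2 = s'.2 := bool_eq_of_iff (by rw [← hiff.2, ← hiff'.2])
    exact Prod.ext h1 h2
  refine ⟨heqv, hIntPos, hdisj, ?_, ?_, ?_, ?_⟩
  · -- injectivity on the torus
    intro q hq q' hq' h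
    obtain ⟨s, x, hx, rfl⟩ := torus_decomp hq
    obtain ⟨s', x', hx', rfl⟩ := torus_decomp hq'
    rw [heqv s x hx, heqv s' x' hx'] at h
    have hMx := hMMmem x hx
    have hMx' := hMMmem x' hx'
    have hss : s = s' := by
      by_contra hne
      exact Set.disjoint_left.1 (hdisj s s' hne) ⟨momentMap Θ x, hMx, rfl⟩
        ⟨momentMap Θ x', hMx', h.symm⟩
    subst hss
    have hMeq : momentMap Θ x = momentMap Θ x' := by
      have h3 := congrArg (quadRefl s) h
      rwa [quadRefl_involutive, quadRefl_involutive] at h3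
    rw [hMMinj hx hx' hMeq]
  · -- continuity of the symmetric extension
    exact cont_sign_abs (B := posQuad) (fun p hp => hp)
      (fun p hp => ⟨abs_pos.2 hp.1, abs_pos.2 hp.2⟩) hMMcont
  · -- image of the torus
    apply Set.Subset.antisymm
    · rintro _ ⟨q, hq, rfl⟩
      obtain ⟨s, x, hx, rfl⟩ := torus_decomp hq
      rw [heqv s x hx]
      exact Set.mem_iUnion.2 ⟨s, ⟨momentMap Θ x, hMMmem x hx, rfl⟩⟩
    · intro p hp
      simp only [tildeSet, Set.mem_iUnion] at hp
      obtain ⟨s, y, hy, rfl⟩ := hp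
      obtain ⟨q, hqP, hqM⟩ := hMMsurj y hy
      refine ⟨quadRefl s q, quadRefl_mem_realTorus hqP, ?_⟩
      rw [heqv s q hqP, hqM]
  · -- the inverse homeomorphism
    refine ⟨fun p => ((Real.sign p.1 * (Ψ (|p.1|, |p.2|)).1,
      Real.sign p.2 * (Ψ (|p.1|, |p.2|)).2) : ℝ × ℝ), ?_, ?_, ?_⟩
    · -- continuity of ψ
      apply cont_sign_abs
      · intro p hp
        simp only [tildeSet, Set.mem_iUnion] at hp
        obtain ⟨s, y, hy, rfl⟩ := hp
        exact quadRefl_mem_realTorus (hIntPos hy)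
      · intro p hp
        simp only [tildeSet, Set.mem_iUnion] at hp
        obtain ⟨s, y, hy, rfl⟩ := hp
        rw [abs_quadRefl s (hIntPos hy)]
        exact hy
      · exact hΨcont
    · -- ψ ∘ φ̃ = id on the torus
      intro q hq
      obtain ⟨s, x, hx, rfl⟩ := torus_decomp hq
      rw [heqv s x hx]
      calc ((Real.sign (quadRefl s (momentMap Θ x)).1 *
            (Ψ (|(quadRefl s (momentMap Θ x)).1|, |(quadRefl s (momentMap Θ x)).2|)).1,
            Real.sign (quadRefl s (momentMap Θ x)).2 *
            (Ψ (|(quadRefl s (momentMap Θ x)).1|, |(quadRefl s (momentMap Θ x)).2|)).2) : ℝ × ℝ)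
          = quadRefl s (Ψ (momentMap Θ x)) := tilde_eval Ψ s (hIntPos (hMMmem x hx))
        _ = quadRefl s x := by rw [hΨleft x hx]
    · -- φ̃ ∘ ψ = id on the image
      intro p hp
      simp only [tildeSet, Set.mem_iUnion] at hp
      obtain ⟨s, y, hy, rfl⟩ := hp
      have hΨy := hΨmem y
      have hψeq : ((Real.sign (quadRefl s y).1 *
            (Ψ (|(quadRefl s y).1|, |(quadRefl s y).2|)).1,
            Real.sign (quadRefl s y).2 *
            (Ψ (|(quadRefl s y).1|, |(quadRefl s y).2|)).2) : ℝ × ℝ)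
          = quadRefl s (Ψ y) := tilde_eval Ψ s (hIntPos hy)
      simp only [hψeq]
      refine ⟨quadRefl_mem_realTorus hΨy, ?_⟩
      rw [heqv s (Ψ y) hΨy, hΨright y hy]
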